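/- For any two simple functions (graphons taking finitely many values on a common measurable partition of [0,1]^2) U, W : [0,1]^2 → [0,1], ∫_0^1 ‖1(U ≥ t) − 1(W ≥ t)‖_□ dt ≤ ‖U − W‖_1. -/

import Mathlib

open MeasureTheory Set

/-- The cut norm of a kernel `W : [0,1]² → ℝ`. -/
noncomputable def cutNorm (W : ℝ → ℝ → ℝ) : ℝ :=
  ⨆ p : {A : Set ℝ // MeasurableSet A ∧ A ⊆ Set.Icc 0 1} ×
        {B : Set ℝ // MeasurableSet B ∧ B ⊆ Set.Icc 0 1},
    |∫ x in p.1.1, ∫ y in p.2.1, W x y|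

lemma thresh_int_aux {u w : ℝ} (hw0 : 0 ≤ w) (hu1 : u ≤ 1) (h : w ≤ u) :
    ∫ t in Set.Icc (0:ℝ) 1, |(if t ≤ u then (1:ℝ) else 0) - (if t ≤ w then (1:ℝ) else 0)|
      = u - w := by
  have heq : (fun t : ℝ => |(if t ≤ u then (1:ℝ) else 0) - (if t ≤ w then (1:ℝ) else 0)|)
      = Set.indicator (Set.Ioc w u) (fun _ => (1:ℝ)) := by
    funext t
    by_cases h1 : t ≤ w
    · have h2 : t ≤ u := h1.trans h
      simp [Set.indicator_apply, Set.mem_Ioc, h1, h2, not_lt.2 h1]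
    · by_cases h2 : t ≤ u
      · simp [Set.indicator_apply, Set.mem_Ioc, h1, h2, lt_of_not_ge h1]
      · simp [Set.indicator_apply, Set.mem_Ioc, h1, h2]
  rw [heq, setIntegral_indicator measurableSet_Ioc]
  have hsub : Set.Icc (0:ℝ) 1 ∩ Set.Ioc w u = Set.Ioc w u := by
    apply Set.inter_eq_self_of_subset_right
    intro t ht
    exact ⟨hw0.trans ht.1.le, ht.2.trans hu1⟩
  rw [hsub]
  simp [Real.volume_Ioc, ENNReal.toReal_ofReal (sub_nonneg.2 h)]
  exact h

lemma thresh_int {u w : ℝ} (hu : u ∈ Set.Icc (0:ℝ) 1) (hw : w ∈ Set.Icc (0:ℝ) 1) :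
    ∫ t in Set.Icc (0:ℝ) 1, |(if t ≤ u then (1:ℝ) else 0) - (if t ≤ w then (1:ℝ) else 0)|
      = |u - w| := by
  rcases le_total w u with h | h
  · rw [thresh_int_aux hw.1 hu.2 h, abs_of_nonneg (sub_nonneg.2 h)]
  · have e : (fun t : ℝ => |(if t ≤ u then (1:ℝ) else 0) - (if t ≤ w then (1:ℝ) else 0)|)
        = fun t : ℝ => |(if t ≤ w then (1:ℝ) else 0) - (if t ≤ u then (1:ℝ) else 0)| := by
      funext t; rw [abs_sub_comm]
    rw [e, thresh_int_aux hu.1 hw.2 h, abs_sub_comm, abs_of_nonneg (sub_nonneg.2 h)]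

lemma exists_rep {n : ℕ} {R : Fin n → Set (ℝ × ℝ)} (hRmeas : ∀ i, MeasurableSet (R i))
    (hRdisj : ∀ i j, i ≠ j → Disjoint (R i) (R j))
    (hRcover : (⋃ i, R i) = Set.Icc (0:ℝ) 1 ×ˢ Set.Icc (0:ℝ) 1)
    (U : ℝ → ℝ → ℝ)
    (hUconst : ∀ i, ∀ p ∈ R i, ∀ q ∈ R i, U p.1 p.2 = U q.1 q.2) :
    ∃ V : ℝ × ℝ → ℝ, Measurable V ∧
      ∀ p ∈ Set.Icc (0:ℝ) 1 ×ˢ Set.Icc (0:ℝ) 1, V p = U p.1 p.2 := by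
  classical
  refine ⟨fun p => ∑ i, Set.indicator (R i)
      (fun _ => if h : (R i).Nonempty then U h.choose.1 h.choose.2 else 0) p, ?_, ?_⟩
  · exact Finset.measurable_sum _ fun i _ => (measurable_const.indicator (hRmeas i))
  · intro p hp
    rw [← hRcover] at hp
    obtain ⟨i, hi⟩ := Set.mem_iUnion.1 hp
    beta_reduce
    rw [Finset.sum_eq_single i]
    · have hne : (R i).Nonempty := ⟨p, hi⟩
      rw [Set.indicator_of_mem hi]
      rw [dif_pos hne]
      exact hUconst i hne.choose hne.choose_spec p hi
    · intro j _ hj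
      exact Set.indicator_of_notMem
        (fun hpj => (hRdisj i j (Ne.symm hj)).ne_of_mem hi hpj rfl) _
    · intro h; exact absurd (Finset.mem_univ i) h

theorem integral_threshold_cutNorm_le_l1 (n : ℕ) (R : Fin n → Set (ℝ × ℝ))
    (hRmeas : ∀ i, MeasurableSet (R i))
    (hRdisj : ∀ i j, i ≠ j → Disjoint (R i) (R j))
    (hRcover : (⋃ i, R i) = Set.Icc (0:ℝ) 1 ×ˢ Set.Icc (0:ℝ) 1)
    (U W : ℝ → ℝ → ℝ)
    (hU01 : ∀ x y, U x y ∈ Set.Icc (0:ℝ) 1) (hW01 : ∀ x y, W x y ∈ Set.Icc (0:ℝ) 1)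
    (hUconst : ∀ i, ∀ p ∈ R i, ∀ q ∈ R i, U p.1 p.2 = U q.1 q.2)
    (hWconst : ∀ i, ∀ p ∈ R i, ∀ q ∈ R i, W p.1 p.2 = W q.1 q.2) :
    (∫ t in Set.Icc (0:ℝ) 1,
        cutNorm (fun x y =>
          (if t ≤ U x y then (1:ℝ) else 0) - (if t ≤ W x y then (1:ℝ) else 0))) ≤
      ∫ x in Set.Icc (0:ℝ) 1, ∫ y in Set.Icc (0:ℝ) 1, |U x y - W x y| := by
  classical
  obtain ⟨Ut, hUtm, hUte⟩ := exists_rep hRmeas hRdisj hRcover U hUconst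
  obtain ⟨Wt, hWtm, hWte⟩ := exists_rep hRmeas hRdisj hRcover W hWconst
  set I : Set ℝ := Set.Icc (0:ℝ) 1 with hI
  set S : Set (ℝ × ℝ) := I ×ˢ I with hS
  have hSm : MeasurableSet S := measurableSet_Icc.prod measurableSet_Icc
  set F : ℝ → ℝ × ℝ → ℝ :=
    fun t p => (if t ≤ Ut p then (1:ℝ) else 0) - (if t ≤ Wt p then (1:ℝ) else 0) with hF
  have hvol : (volume : Measure (ℝ × ℝ)) = (volume : Measure ℝ).prod volume :=
    Measure.volume_eq_prod ℝ ℝ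
  have hjm : Measurable (fun q : ℝ × (ℝ × ℝ) => F q.1 q.2) := by
    apply Measurable.sub
    · exact Measurable.ite (measurableSet_le measurable_fst (hUtm.comp measurable_snd))
        measurable_const measurable_const
    · exact Measurable.ite (measurableSet_le measurable_fst (hWtm.comp measurable_snd))
        measurable_const measurable_const
  have hFm : ∀ t, Measurable (F t) :=
    fun t => hjm.comp (measurable_const.prodMk measurable_id)
  have hFb : ∀ t p, |F t p| ≤ 1 := by
    intro t p; simp only [hF]; split_ifs <;> norm_num
  have hSvol : volume S < ⊤ := by
    rw [hvol, hS, Measure.prod_prod]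
    simp [hI, Real.volume_Icc]
  haveI : IsFiniteMeasure (volume.restrict I) :=
    ⟨by rw [Measure.restrict_apply_univ]; simp [hI, Real.volume_Icc]⟩
  haveI : IsFiniteMeasure (volume.restrict S) :=
    ⟨by rw [Measure.restrict_apply_univ]; exact hSvol⟩
  have hFint : ∀ t, IntegrableOn (fun p => |F t p|) S :=
    fun t => Measure.integrableOn_of_bounded hSvol.ne ((hFm t).abs.aestronglyMeasurable)
      (ae_of_all _ fun p => by rw [Real.norm_eq_abs, abs_abs]; exact hFb t p)
  have hFint' : ∀ t (s : Set (ℝ × ℝ)), s ⊆ S → IntegrableOn (F t) s := fun t s hs =>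
    Measure.integrableOn_of_bounded (ne_of_lt (lt_of_le_of_lt (measure_mono hs) hSvol))
      (hFm t).aestronglyMeasurable
      (ae_of_all _ fun p => by rw [Real.norm_eq_abs]; exact hFb t p)
  have Hprod : Integrable (fun q : ℝ × (ℝ × ℝ) => |F q.1 q.2|)
      ((volume.restrict I).prod (volume.restrict S)) := by
    apply Integrable.mono' (integrable_const (1:ℝ)) hjm.abs.aestronglyMeasurable
    exact ae_of_all _ fun q => by rw [Real.norm_eq_abs, abs_abs]; exact hFb _ _
  -- step 1: pointwise bound on cut norm
  have key1 : ∀ t, cutNorm (fun x y =>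
      (if t ≤ U x y then (1:ℝ) else 0) - (if t ≤ W x y then (1:ℝ) else 0))
      ≤ ∫ p in S, |F t p| := by
    intro t
    apply Real.iSup_le _ (setIntegral_nonneg hSm fun p _ => abs_nonneg _)
    rintro ⟨⟨A, hAm, hAs⟩, ⟨B, hBm, hBs⟩⟩
    have hAB : A ×ˢ B ⊆ S := Set.prod_mono hAs hBs
    have e1 : ∫ x in A, ∫ y in B,
        ((if t ≤ U x y then (1:ℝ) else 0) - (if t ≤ W x y then (1:ℝ) else 0))
        = ∫ x in A, ∫ y in B, F t (x, y) := by
      apply setIntegral_congr_fun hAm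
      intro x hx
      apply setIntegral_congr_fun hBm
      intro y hy
      have hm : (x, y) ∈ S := ⟨hAs hx, hBs hy⟩
      simp only [hF, hUte _ hm, hWte _ hm]
    have e2 : ∫ z in A ×ˢ B, F t z = ∫ x in A, ∫ y in B, F t (x, y) := by
      rw [hvol]
      exact setIntegral_prod (F t) (by rw [← hvol]; exact hFint' t _ hAB)
    simp only [e1, ← e2]
    calc |∫ z in A ×ˢ B, F t z| ≤ ∫ z in A ×ˢ B, |F t z| := by
          simpa [Real.norm_eq_abs] using
            norm_integral_le_integral_norm (μ := volume.restrict (A ×ˢ B)) (F t)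
      _ ≤ ∫ z in S, |F t z| :=
          setIntegral_mono_set (hFint t) (ae_of_all _ fun p => abs_nonneg _)
            (HasSubset.Subset.eventuallyLE hAB)
  have gint : Integrable (fun t => ∫ p in S, |F t p|) (volume.restrict I) :=
    Hprod.integral_prod_left
  have step1 : (∫ t in I, cutNorm (fun x y =>
      (if t ≤ U x y then (1:ℝ) else 0) - (if t ≤ W x y then (1:ℝ) else 0)))
      ≤ ∫ t in I, ∫ p in S, |F t p| :=
    integral_mono_of_nonneg (ae_of_all _ fun t => Real.iSup_nonneg fun _ => abs_nonneg _)
      gint (ae_of_all _ key1)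
  have swap : (∫ t in I, ∫ p in S, |F t p|) = ∫ p in S, ∫ t in I, |F t p| :=
    integral_integral_swap Hprod
  have ptwise : ∀ p ∈ S, (∫ t in I, |F t p|) = |Ut p - Wt p| := by
    intro p hp
    simp only [hF]
    rw [hUte p hp, hWte p hp, hI]
    exact thresh_int (hU01 p.1 p.2) (hW01 p.1 p.2)
  have e3 : (∫ p in S, ∫ t in I, |F t p|) = ∫ p in S, |Ut p - Wt p| :=
    setIntegral_congr_fun hSm fun p hp => ptwise p hp
  have hUWint : IntegrableOn (fun p => |Ut p - Wt p|) S := by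
    apply Measure.integrableOn_of_bounded (M := 2) hSvol.ne
      ((hUtm.sub hWtm).abs.aestronglyMeasurable)
    refine (ae_restrict_iff' hSm).2 (ae_of_all _ fun p hp => ?_)
    rw [Real.norm_eq_abs, abs_abs, Pi.sub_apply, hUte p hp, hWte p hp]
    have h1 := hU01 p.1 p.2; have h2 := hW01 p.1 p.2
    rw [Set.mem_Icc] at h1 h2
    rw [abs_sub_le_iff]; constructor <;> linarith [h1.1, h1.2, h2.1, h2.2]
  have e4 : (∫ p in S, |Ut p - Wt p|) = ∫ x in I, ∫ y in I, |Ut (x, y) - Wt (x, y)| := by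
    rw [hvol]
    exact setIntegral_prod _ (by rw [← hvol]; exact hUWint)
  have e5 : (∫ x in I, ∫ y in I, |Ut (x, y) - Wt (x, y)|)
      = ∫ x in I, ∫ y in I, |U x y - W x y| := by
    apply setIntegral_congr_fun measurableSet_Icc
    intro x hx
    apply setIntegral_congr_fun measurableSet_Icc
    intro y hy
    have hm : (x, y) ∈ S := ⟨hx, hy⟩
    show |Ut (x, y) - Wt (x, y)| = |U x y - W x y|
    rw [hUte _ hm, hWte _ hm]
  calc (∫ t in I, cutNorm (fun x y =>
      (if t ≤ U x y then (1:ℝ) else 0) - (if t ≤ W x y then (1:ℝ) else 0)))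
      ≤ ∫ t in I, ∫ p in S, |F t p| := step1
    _ = ∫ x in I, ∫ y in I, |U x y - W x y| := by rw [swap, e3, e4, e5]
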